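/- Let k ≥ 1 and let C_{2k+1} be the cycle graph on 2k+1 vertices. Then the fractional zero forcing number of C_{2k+1} equals (2k+1)/(k+1), and the fort number of C_{2k+1} equals 1. -/

import Mathlib

open Finset

/-- A fort of a graph: a nonempty (finite) set of vertices `F` such that no vertex
outside `F` has exactly one neighbor in `F`. -/
def IsFort {V : Type*} (G : SimpleGraph V) (F : Finset V) : Prop :=
  F.Nonempty ∧ ∀ v ∉ F, ¬ ∃! u, u ∈ F ∧ G.Adj v u

/-- The fort number: the maximum cardinality of a collection of pairwise disjoint forts. -/
noncomputable def fortNumber {V : Type*} (G : SimpleGraph V) : ℕ :=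
  sSup {k | ∃ 𝒞 : Finset (Finset V), (∀ F ∈ 𝒞, IsFort G F) ∧
    (↑𝒞 : Set (Finset V)).Pairwise Disjoint ∧ 𝒞.card = k}

/-- The fractional zero forcing number. -/
noncomputable def fracZ {V : Type*} [Fintype V] (G : SimpleGraph V) : ℝ :=
  sInf {x : ℝ | ∃ ω : V → ℝ, (∀ v, 0 ≤ ω v) ∧
    (∀ F : Finset V, IsFort G F → 1 ≤ ∑ v ∈ F, ω v) ∧ x = ∑ v, ω v}

/-- The set of vertices eventually filled by the zero forcing process started at `S`. -/
inductive ZFForced {V : Type*} (G : SimpleGraph V) (S : Set V) : V → Prop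
  | init (v : V) : v ∈ S → ZFForced G S v
  | force (u w : V) : G.Adj u w → ZFForced G S u →
      (∀ x, G.Adj u x → x ≠ w → ZFForced G S x) → ZFForced G S w

/-- A zero forcing set: starting from `S`, every vertex is eventually filled. -/
def IsZeroForcingSet {V : Type*} (G : SimpleGraph V) (S : Set V) : Prop :=
  ∀ v, ZFForced G S v

/-- The zero forcing number: minimum cardinality of a zero forcing set. -/
noncomputable def zfNumber {V : Type*} (G : SimpleGraph V) : ℕ :=
  sInf {k | ∃ S : Finset V, IsZeroForcingSet G ↑S ∧ S.card = k}

namespace OddCycleAux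

open Fin.NatCast Fin.CommRing

variable {k : ℕ}

lemma val_one' (hk : 1 ≤ k) : (1 : Fin (2*k+1)).val = 1 := by
  rw [Fin.val_one', Nat.mod_eq_of_lt (by omega)]

lemma adj_iff (hk : 1 ≤ k) {u v : Fin (2*k+1)} :
    (SimpleGraph.cycleGraph (2*k+1)).Adj u v ↔ v = u + 1 ∨ v = u - 1 := by
  rw [SimpleGraph.cycleGraph_adj']
  have h1 : (1 : Fin (2*k+1)).val = 1 := val_one' hk
  constructor
  · rintro (h | h)
    · right
      have h' : u - v = 1 := Fin.ext (by rw [h1]; exact h)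
      rw [← h']; abel
    · left
      have h' : v - u = 1 := Fin.ext (by rw [h1]; exact h)
      rw [← h']; abel
  · rintro (rfl | rfl)
    · right; rw [show u + 1 - u = 1 by abel]; exact h1
    · left; rw [show u - (u - 1) = 1 by abel]; exact h1

lemma two_ne (hk : 1 ≤ k) (u : Fin (2*k+1)) : u + 1 ≠ u - 1 := by
  intro h
  have h2 : u + 1 + 1 = u := by rw [h]; abel
  have h3 : ((1:Fin (2*k+1)) + 1).val = 2 := by
    rw [Fin.add_def, val_one' hk]
    show (1+1) % (2*k+1) = 2
    rw [Nat.mod_eq_of_lt] <;> omega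
  have h4 : u + (1 + 1) = u + 0 := by rw [← add_assoc, h2, add_zero]
  have := add_left_cancel h4
  rw [this] at h3
  simp at h3

lemma cast_inj' (hk : 1 ≤ k) {a b : ℕ} (ha : a < 2*k+1) (hb : b < 2*k+1)
    (h : ((a:ℕ):Fin (2*k+1)) = ((b:ℕ):Fin (2*k+1))) : a = b := by
  have := congrArg Fin.val h
  rwa [Fin.val_cast_of_lt ha, Fin.val_cast_of_lt hb] at this


lemma fort_closed (hk : 1 ≤ k) {F : Finset (Fin (2*k+1))}
    (hF : IsFort (SimpleGraph.cycleGraph (2*k+1)) F) :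
    ∀ v ∉ F, v + 1 ∈ F ∧ v - 1 ∈ F := by
  -- propagation helper
  have hprop : ∀ w, w ∉ F → w - 1 ∉ F → w + 1 ∉ F := by
    intro w hw hw1 hw2
    apply hF.2 w hw
    refine ⟨w + 1, ⟨hw2, (adj_iff hk).mpr (Or.inl rfl)⟩, ?_⟩
    rintro u ⟨huF, hadj⟩
    rcases (adj_iff hk).mp hadj with rfl | rfl
    · rfl
    · exact absurd huF hw1
  have hprop' : ∀ w, w ∉ F → w + 1 ∉ F → w - 1 ∉ F := by
    intro w hw hw1 hw2
    apply hF.2 w hw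
    refine ⟨w - 1, ⟨hw2, (adj_iff hk).mpr (Or.inr rfl)⟩, ?_⟩
    rintro u ⟨huF, hadj⟩
    rcases (adj_iff hk).mp hadj with rfl | rfl
    · exact absurd huF hw1
    · rfl
  intro v hv
  by_contra hcon
  -- at least one neighbor missing; then both are missing
  have hboth : v + 1 ∉ F ∧ v - 1 ∉ F := by
    by_cases h1 : v + 1 ∈ F
    · by_cases h2 : v - 1 ∈ F
      · exact absurd ⟨h1, h2⟩ hcon
      · exfalso
        apply hF.2 v hv
        refine ⟨v + 1, ⟨h1, (adj_iff hk).mpr (Or.inl rfl)⟩, ?_⟩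
        rintro u ⟨huF, hadj⟩
        rcases (adj_iff hk).mp hadj with rfl | rfl
        · rfl
        · exact absurd huF h2
    · exact ⟨h1, hprop' v hv h1⟩
  -- propagation: every v + j is outside F
  have hstep : ∀ j : ℕ, v + ((j:ℕ) : Fin (2*k+1)) ∉ F ∧ v + (((j+1:ℕ)) : Fin (2*k+1)) ∉ F := by
    intro j
    induction j with
    | zero =>
      constructor
      · simpa using hv
      · simpa using hboth.1
    | succ j ih =>
      refine ⟨ih.2, ?_⟩
      have e1 : v + (((j+1:ℕ)) : Fin (2*k+1)) - 1 = v + ((j:ℕ) : Fin (2*k+1)) := by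
        push_cast; abel
      have e2 : v + (((j+1:ℕ)) : Fin (2*k+1)) + 1 = v + (((j+2:ℕ)) : Fin (2*k+1)) := by
        push_cast; ring
      have := hprop _ ih.2 (e1 ▸ ih.1)
      rwa [e2] at this
  obtain ⟨u, hu⟩ := hF.1
  have : u = v + (((u - v).val : ℕ) : Fin (2*k+1)) := by
    rw [Fin.cast_val_eq_self]; abel
  rw [this] at hu
  exact (hstep (u - v).val).1 hu

lemma fort_card (hk : 1 ≤ k) {F : Finset (Fin (2*k+1))}
    (hF : IsFort (SimpleGraph.cycleGraph (2*k+1)) F) : k + 1 ≤ F.card := by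
  have hinj : ∀ v ∈ Fᶜ, v + 1 ∈ F := fun v hv =>
    (fort_closed hk hF v (Finset.mem_compl.mp hv)).1
  have hle : Fᶜ.card ≤ F.card := by
    apply Finset.card_le_card_of_injOn (fun v => v + 1) hinj
    intro a _ b _ h
    exact add_right_cancel h
  have hc : Fᶜ.card = 2*k+1 - F.card := by
    rw [Finset.card_compl, Fintype.card_fin]
  have hle2 : F.card ≤ 2*k+1 := by
    simpa using Finset.card_le_univ F
  omega


lemma fortNumber_eq (hk : 1 ≤ k) :
    fortNumber (SimpleGraph.cycleGraph (2*k+1)) = 1 := by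
  have mem1 : 1 ∈ {m | ∃ 𝒞 : Finset (Finset (Fin (2*k+1))),
      (∀ F ∈ 𝒞, IsFort (SimpleGraph.cycleGraph (2*k+1)) F) ∧
      (↑𝒞 : Set (Finset (Fin (2*k+1)))).Pairwise Disjoint ∧ 𝒞.card = 1} := by
    refine ⟨{Finset.univ}, ?_, ?_, Finset.card_singleton _⟩
    · intro F hF
      rw [Finset.mem_singleton] at hF
      subst hF
      exact ⟨Finset.univ_nonempty, fun v hv => absurd (Finset.mem_univ v) hv⟩
    · rw [Finset.coe_singleton]
      exact Set.pairwise_singleton _ _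
  have hub : ∀ m ∈ {m | ∃ 𝒞 : Finset (Finset (Fin (2*k+1))),
      (∀ F ∈ 𝒞, IsFort (SimpleGraph.cycleGraph (2*k+1)) F) ∧
      (↑𝒞 : Set (Finset (Fin (2*k+1)))).Pairwise Disjoint ∧ 𝒞.card = m}, m ≤ 1 := by
    rintro m ⟨𝒞, hfort, hdisj, rfl⟩
    apply Finset.card_le_one.mpr
    intro a ha b hb
    by_contra hne
    have hd : Disjoint a b := hdisj (Finset.mem_coe.mpr ha) (Finset.mem_coe.mpr hb) hne
    have h1 := fort_card hk (hfort a ha)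
    have h2 := fort_card hk (hfort b hb)
    have : (a ∪ b).card = a.card + b.card := Finset.card_union_of_disjoint hd
    have hle : (a ∪ b).card ≤ 2*k+1 := by simpa using Finset.card_le_univ (a ∪ b)
    omega
  exact le_antisymm (csSup_le ⟨1, mem1⟩ hub) (le_csSup ⟨1, hub⟩ mem1)

/-- the independent set `{i, i+2, ..., i+2(k-1)}` -/
def Iset (k : ℕ) (i : Fin (2*k+1)) : Finset (Fin (2*k+1)) :=
  (Finset.range k).image (fun j => i + ((2*j : ℕ) : Fin (2*k+1)))

lemma Iset_card (hk : 1 ≤ k) (i : Fin (2*k+1)) : (Iset k i).card = k := by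
  rw [Iset, Finset.card_image_of_injOn, Finset.card_range]
  intro a ha b hb h
  rw [Finset.coe_range, Set.mem_Iio] at ha hb
  have := add_left_cancel h
  have := cast_inj' hk (by omega) (by omega) this
  omega

lemma mem_Iset_iff {i v : Fin (2*k+1)} :
    v ∈ Iset k i ↔ ∃ j < k, v = i + ((2*j : ℕ) : Fin (2*k+1)) := by
  simp only [Iset, Finset.mem_image, Finset.mem_range]
  constructor
  · rintro ⟨j, hj, rfl⟩; exact ⟨j, hj, rfl⟩
  · rintro ⟨j, hj, rfl⟩; exact ⟨j, hj, rfl⟩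

lemma Iset_fort (hk : 1 ≤ k) (i : Fin (2*k+1)) :
    IsFort (SimpleGraph.cycleGraph (2*k+1)) (Iset k i)ᶜ := by
  constructor
  · rw [← Finset.card_pos, Finset.card_compl, Fintype.card_fin, Iset_card hk]
    omega
  · intro v hv
    rw [Finset.mem_compl, not_not] at hv
    obtain ⟨j, hj, rfl⟩ := mem_Iset_iff.mp hv
    set v := i + ((2*j : ℕ) : Fin (2*k+1)) with hvdef
    have hp : v + 1 ∉ Iset k i := by
      intro hmem
      obtain ⟨j', hj', he⟩ := mem_Iset_iff.mp hmem
      have : ((2*j+1 : ℕ) : Fin (2*k+1)) = ((2*j' : ℕ) : Fin (2*k+1)) := by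
        apply add_left_cancel (a := i)
        rw [← he, hvdef]; push_cast; ring
      have := cast_inj' hk (by omega) (by omega) this
      omega
    have hm : v - 1 ∉ Iset k i := by
      intro hmem
      obtain ⟨j', hj', he⟩ := mem_Iset_iff.mp hmem
      have : ((2*j : ℕ) : Fin (2*k+1)) = ((2*j'+1 : ℕ) : Fin (2*k+1)) := by
        apply add_left_cancel (a := i)
        have hve : v = i + ((2*j' : ℕ) : Fin (2*k+1)) + 1 := by rw [← he]; abel
        rw [← hvdef, hve]; push_cast; ring
      have := cast_inj' hk (by omega) (by omega) this
      omega
    rintro ⟨u, ⟨huF, hadj⟩, huniq⟩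
    have e1 := huniq (v + 1) ⟨Finset.mem_compl.mpr hp, (adj_iff hk).mpr (Or.inl rfl)⟩
    have e2 := huniq (v - 1) ⟨Finset.mem_compl.mpr hm, (adj_iff hk).mpr (Or.inr rfl)⟩
    exact two_ne hk v (e1.trans e2.symm)

lemma count_Iset (hk : 1 ≤ k) (v : Fin (2*k+1)) :
    (Finset.univ.filter (fun i => v ∈ Iset k i)).card = k := by
  have : Finset.univ.filter (fun i => v ∈ Iset k i)
      = (Finset.range k).image (fun j => v - ((2*j : ℕ) : Fin (2*k+1))) := by
    ext i
    simp only [Finset.mem_filter, Finset.mem_univ, true_and, Finset.mem_image,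
      Finset.mem_range, mem_Iset_iff]
    constructor
    · rintro ⟨j, hj, he⟩
      exact ⟨j, hj, by rw [he]; abel⟩
    · rintro ⟨j, hj, rfl⟩
      exact ⟨j, hj, by abel⟩
  rw [this, Finset.card_image_of_injOn, Finset.card_range]
  intro a ha b hb h
  rw [Finset.coe_range, Set.mem_Iio] at ha hb
  have h2 : ((2*a : ℕ) : Fin (2*k+1)) = ((2*b : ℕ) : Fin (2*k+1)) := sub_right_inj.mp h
  have := cast_inj' hk (by omega) (by omega) h2
  omega


lemma count_compl (hk : 1 ≤ k) (v : Fin (2*k+1)) :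
    (Finset.univ.filter (fun i : Fin (2*k+1) => v ∈ (Iset k i)ᶜ)).card = k + 1 := by
  classical
  have h := Finset.card_filter_add_card_filter_not
    (s := (Finset.univ : Finset (Fin (2*k+1)))) (p := fun i => v ∈ Iset k i)
  have hc := count_Iset hk v
  have huniv : (Finset.univ : Finset (Fin (2*k+1))).card = 2*k+1 := by simp
  have : ∀ i : Fin (2*k+1), (v ∈ (Iset k i)ᶜ) ↔ ¬ (v ∈ Iset k i) := fun i => Finset.mem_compl
  simp only [this]
  omega

lemma fracZ_lower (hk : 1 ≤ k) {ω : Fin (2*k+1) → ℝ} (h0 : ∀ v, 0 ≤ ω v)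
    (h1 : ∀ F : Finset (Fin (2*k+1)), IsFort (SimpleGraph.cycleGraph (2*k+1)) F →
      1 ≤ ∑ v ∈ F, ω v) :
    (2 * (k:ℝ) + 1) / ((k:ℝ) + 1) ≤ ∑ v, ω v := by
  classical
  have key : (2 * (k:ℝ) + 1) ≤ ((k:ℝ) + 1) * ∑ v, ω v := by
    calc (2 * (k:ℝ) + 1) = ∑ _i : Fin (2*k+1), (1:ℝ) := by
          rw [Finset.sum_const, Finset.card_univ, Fintype.card_fin]
          push_cast; ring
      _ ≤ ∑ i : Fin (2*k+1), ∑ v ∈ (Iset k i)ᶜ, ω v :=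
          Finset.sum_le_sum (fun i _ => h1 _ (Iset_fort hk i))
      _ = ∑ i : Fin (2*k+1), ∑ v : Fin (2*k+1), if v ∈ (Iset k i)ᶜ then ω v else 0 := by
          refine Finset.sum_congr rfl (fun i _ => ?_)
          rw [← Finset.sum_filter]
          congr 1
          ext v
          simp
      _ = ∑ v : Fin (2*k+1), ∑ i : Fin (2*k+1), if v ∈ (Iset k i)ᶜ then ω v else 0 :=
          Finset.sum_comm
      _ = ∑ v : Fin (2*k+1), ((k:ℝ) + 1) * ω v := by
          refine Finset.sum_congr rfl (fun v _ => ?_)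
          rw [← Finset.sum_filter, Finset.sum_const, count_compl hk v]
          push_cast; ring
      _ = ((k:ℝ) + 1) * ∑ v, ω v := by rw [Finset.mul_sum]
  rw [div_le_iff₀ (by positivity)]
  linarith [key]

lemma fracZ_eq (hk : 1 ≤ k) :
    fracZ (SimpleGraph.cycleGraph (2*k+1)) = (2 * (k:ℝ) + 1) / ((k:ℝ) + 1) := by
  classical
  have hmem : (2 * (k:ℝ) + 1) / ((k:ℝ) + 1) ∈ {x : ℝ | ∃ ω : Fin (2*k+1) → ℝ,
      (∀ v, 0 ≤ ω v) ∧ (∀ F : Finset (Fin (2*k+1)),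
        IsFort (SimpleGraph.cycleGraph (2*k+1)) F → 1 ≤ ∑ v ∈ F, ω v) ∧
      x = ∑ v, ω v} := by
    refine ⟨fun _ => ((k:ℝ) + 1)⁻¹, fun v => by positivity, ?_, ?_⟩
    · intro F hF
      rw [Finset.sum_const, nsmul_eq_mul]
      have hcard := fort_card hk hF
      have hk1 : (0:ℝ) < (k:ℝ) + 1 := by positivity
      rw [← div_eq_mul_inv, le_div_iff₀ hk1, one_mul]
      exact_mod_cast hcard
    · rw [Finset.sum_const, Finset.card_univ, Fintype.card_fin, nsmul_eq_mul,
        ← div_eq_mul_inv]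
      push_cast; ring
  unfold fracZ
  apply le_antisymm
  · exact csInf_le ⟨(2 * (k:ℝ) + 1) / ((k:ℝ) + 1), by
      rintro x ⟨ω, h0, h1, rfl⟩
      exact fracZ_lower hk h0 h1⟩ hmem
  · apply le_csInf ⟨_, hmem⟩
    rintro x ⟨ω, h0, h1, rfl⟩
    exact fracZ_lower hk h0 h1

end OddCycleAux

/-- for `k ≥ 1`, `Z*(C_{2k+1}) = (2k+1)/(k+1)` and `ft(C_{2k+1}) = 1`. -/
theorem oddCycle_fracZ_fortNumber (k : ℕ) (hk : 1 ≤ k) :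
    fracZ (SimpleGraph.cycleGraph (2 * k + 1)) = (2 * (k : ℝ) + 1) / ((k : ℝ) + 1) ∧
    fortNumber (SimpleGraph.cycleGraph (2 * k + 1)) = 1 :=
  ⟨OddCycleAux.fracZ_eq hk, OddCycleAux.fortNumber_eq hk⟩
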